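/- Let G be a finite connected graph with N vertices and let f be a radio labeling of G. Let z_0, z_1, …, z_{N−1} be the ordering of the vertices of G with 0 ≤ f(z_0) < f(z_1) < … < f(z_{N−1}). Then span(f) ≥ f(z_{N−1}) − f(z_0) ≥ (N − 1)(diam(G) + 1) − ∑_{i=0}^{N−2} d(z_i, z_{i+1}). -/
import Mathlib


/-!
Common definitions: radio labelings, weight centers, levels, branches,
generalized Petersen graphs, stars.
-/

open Finset

namespace RadioPaper

variable {V : Type*}

/-- The diameter of a finite graph: the maximum distance between two vertices. -/
noncomputable def graphDiam [Fintype V] (G : SimpleGraph V) : ℕ :=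
  Finset.univ.sup fun p : V × V => G.dist p.1 p.2

/-- A radio labeling of `G`: `|f u - f v| ≥ diam G + 1 - d(u,v)` for distinct `u, v`. -/
def IsRadioLabeling [Fintype V] (G : SimpleGraph V) (f : V → ℕ) : Prop :=
  ∀ u v : V, u ≠ v → (graphDiam G : ℤ) + 1 - G.dist u v ≤ |(f u : ℤ) - (f v : ℤ)|

/-- The span of a labeling: the maximum of `|f u - f v|` over all pairs of vertices. -/
noncomputable def radioSpan [Fintype V] (f : V → ℕ) : ℕ :=
  Finset.univ.sup fun p : V × V => f p.1 - f p.2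

/-- The radio number of `G`: the minimum span over all radio labelings. -/
noncomputable def radioNumber [Fintype V] (G : SimpleGraph V) : ℕ :=
  sInf {s : ℕ | ∃ f : V → ℕ, IsRadioLabeling G f ∧ radioSpan f = s}

/-- The weight of a graph at a vertex `u`: the sum of distances from `u` to all vertices. -/
noncomputable def weight [Fintype V] (T : SimpleGraph V) (u : V) : ℕ :=
  ∑ v : V, T.dist u v

/-- The set of weight centers: vertices minimizing the weight. -/
def weightCenters [Fintype V] (T : SimpleGraph V) : Set V :=
  {c | ∀ u : V, weight T c ≤ weight T u}

/-- The level of a vertex: its distance to a nearest weight center. -/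
noncomputable def level [Fintype V] (T : SimpleGraph V) (x : V) : ℕ :=
  sInf {d : ℕ | ∃ w ∈ weightCenters T, T.dist x w = d}

/-- The total level of `T`: sum of the levels of all vertices. -/
noncomputable def totalLevel [Fintype V] (T : SimpleGraph V) : ℕ :=
  ∑ x : V, level T x

/-- `ε(T) = 1` if `T` has a unique weight center, and `0` otherwise (two centers). -/
noncomputable def eps [Fintype V] (T : SimpleGraph V) : ℕ :=
  if (weightCenters T).ncard = 1 then 1 else 0

/-- `z` is an ancestor of `x` in the tree rooted at its weight center(s):
`z` lies on the path from some weight center to `x`. -/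
def IsAncestor [Fintype V] (T : SimpleGraph V) (z x : V) : Prop :=
  ∃ w ∈ weightCenters T, T.dist w z + T.dist z x = T.dist w x

/-- `φ_T(x,y)`: the maximum level of a common ancestor of `x` and `y`. -/
noncomputable def phi [Fintype V] (T : SimpleGraph V) (x y : V) : ℕ :=
  sSup {l : ℕ | ∃ z : V, IsAncestor T z x ∧ IsAncestor T z y ∧ level T z = l}

/-- `x` and `y` are in opposite branches: `T` has two weight centers `w, w'` and
`x, y` lie in different components of `T - ww'`. -/
def OppositeBranches [Fintype V] (T : SimpleGraph V) (x y : V) : Prop :=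
  ∃ w w' : V, w ≠ w' ∧ weightCenters T = {w, w'} ∧
    ¬ (T.deleteEdges {s(w, w')}).Reachable x y

open Classical in
/-- `δ_T(x,y) = 1` if `T` has two weight centers and `x, y` are in opposite branches,
and `0` otherwise. -/
noncomputable def delta [Fintype V] (T : SimpleGraph V) (x y : V) : ℕ :=
  if (weightCenters T).ncard = 2 ∧ OppositeBranches T x y then 1 else 0

/-- `x` and `y` are in different branches: some weight center lies on the `x`–`y` path
(equivalently, the paths from the center to `x` and to `y` depart through different
neighbours, or one of `x, y` is a weight center). -/
def DifferentBranches [Fintype V] (T : SimpleGraph V) (x y : V) : Prop :=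
  ∃ w ∈ weightCenters T, T.dist x w + T.dist w y = T.dist x y

/-- `x` and `y` are in the same branch: both belong to the branch of `T` induced by some
non-central neighbour `u` of a weight center `w` together with all of `u`'s descendants. -/
def SameBranch [Fintype V] (T : SimpleGraph V) (x y : V) : Prop :=
  ∃ w ∈ weightCenters T, ∃ u : V, u ∉ weightCenters T ∧ T.Adj w u ∧
    T.dist w x = 1 + T.dist u x ∧ T.dist w y = 1 + T.dist u y

/-- The generalized Petersen graph `P_{m,k}`: outer vertices `(false, i)` (the `u_i`) and
inner vertices `(true, i)` (the `v_i`), with edges `u_i u_{i+1}`, `u_i v_i`, `v_i v_{i+k}`. -/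
def genPetersen (m k : ℕ) : SimpleGraph (Bool × ZMod m) :=
  SimpleGraph.fromRel fun a b =>
    (a.1 = false ∧ b.1 = false ∧ b.2 = a.2 + 1) ∨
    (a.1 = false ∧ b.1 = true ∧ a.2 = b.2) ∨
    (a.1 = true ∧ b.1 = true ∧ b.2 = a.2 + (k : ZMod m))

/-- The star `K_{1,n}`: vertex `0` is the centre, joined to the `n` leaves. -/
def starGraph (n : ℕ) : SimpleGraph (Fin (n + 1)) :=
  SimpleGraph.fromRel fun a _ => a = 0


/-- For any radio labeling `f` of a connected graph `G` on `N` vertices, ordering the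
vertices as `z_0, …, z_{N-1}` with strictly increasing labels, the span of `f` is at least
`f(z_{N-1}) - f(z_0) ≥ (N-1)(diam G + 1) - ∑_{i=0}^{N-2} d(z_i, z_{i+1})`. -/
theorem span_lower_bound_of_ordering
    {V : Type*} [Fintype V] (G : SimpleGraph V) (hG : G.Connected)
    (f : V → ℕ) (hf : IsRadioLabeling G f)
    (o : ℕ → V) (ho : ∀ v : V, ∃! t : ℕ, t < Fintype.card V ∧ o t = v)
    (hmono : ∀ s t : ℕ, s < t → t < Fintype.card V → f (o s) < f (o t)) :
    (f (o (Fintype.card V - 1)) : ℤ) - f (o 0) ≤ radioSpan f ∧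
    ((Fintype.card V : ℤ) - 1) * (graphDiam G + 1) -
        ∑ i ∈ Finset.range (Fintype.card V - 1), (G.dist (o i) (o (i + 1)) : ℤ) ≤
      (f (o (Fintype.card V - 1)) : ℤ) - f (o 0) := by

  have hNpos : 0 < Fintype.card V := Fintype.card_pos_iff.mpr hG.nonempty
  set N := Fintype.card V with hN
  constructor
  · have h1 : f (o (N - 1)) - f (o 0) ≤ radioSpan f := by
      exact Finset.le_sup (f := fun p : V × V => f p.1 - f p.2)
        (Finset.mem_univ (o (N - 1), o 0))
    omega
  · have key : ∀ n : ℕ, n ≤ N - 1 →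
        (n : ℤ) * (graphDiam G + 1) -
          ∑ i ∈ Finset.range n, (G.dist (o i) (o (i + 1)) : ℤ) ≤
          (f (o n) : ℤ) - f (o 0) := by
      intro n hn
      induction n with
      | zero => simp
      | succ m ih =>
        have hm : m ≤ N - 1 := by omega
        have ih' := ih hm
        have hlt : f (o m) < f (o (m + 1)) := hmono m (m + 1) (by omega) (by omega)
        have hne : o m ≠ o (m + 1) := by
          intro h; rw [h] at hlt; omega
        have hrad := hf (o m) (o (m + 1)) hne
        have habs : |(f (o m) : ℤ) - f (o (m + 1))| = (f (o (m + 1)) : ℤ) - f (o m) := by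
          rw [abs_sub_comm, abs_of_nonneg]; omega
        rw [habs] at hrad
        rw [Finset.sum_range_succ]
        push_cast
        linarith
    have h2 := key (N - 1) le_rfl
    have hcast : ((N - 1 : ℕ) : ℤ) = (N : ℤ) - 1 := by
      have := hNpos; omega
    rw [hcast] at h2
    exact h2


end RadioPaper
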